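/- (Theorem 5.) Let x ∈ ℝ² with f(x) ≠ 0. Then f(x)ᵀ (Df(x) + Df(x)ᵀ) f⊥(x) = 0 if and only if there exists a scalar c ∈ ℝ such that the Lie bracket satisfies [f, f⊥](x) = c · f⊥(x), where [f, f⊥] := Df⊥ · f − Df · f⊥. -/
import Mathlib

open Matrix

noncomputable section

/-- The perpendicular vector field on ℝ²: `(v₁, v₂) ↦ (v₂, −v₁)`. -/
def perp (v : Fin 2 → ℝ) : Fin 2 → ℝ := ![v 1, -v 0]

/-- The Jacobian matrix of `f : ℝ² → ℝ²` at a point `x`: entry `(i, j)` is `∂fᵢ/∂xⱼ (x)`. -/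
def jac (f : (Fin 2 → ℝ) → (Fin 2 → ℝ)) (x : Fin 2 → ℝ) : Matrix (Fin 2) (Fin 2) ℝ :=
  Matrix.of fun i j => fderiv ℝ f x (Pi.single j 1) i

/-- The divergence of `f : ℝ² → ℝ²`, i.e. the trace of its Jacobian. -/
def divg (f : (Fin 2 → ℝ) → (Fin 2 → ℝ)) (x : Fin 2 → ℝ) : ℝ := (jac f x).trace

/-- The Lie bracket of two planar vector fields: `[g, h] := Dh · g − Dg · h`. -/
def lieBr (g h : (Fin 2 → ℝ) → (Fin 2 → ℝ)) (x : Fin 2 → ℝ) : Fin 2 → ℝ :=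
  (jac h x).mulVec (g x) - (jac g x).mulVec (h x)

lemma perp_apply_zero (v : Fin 2 → ℝ) : perp v 0 = v 1 := rfl
lemma perp_apply_one (v : Fin 2 → ℝ) : perp v 1 = -v 0 := rfl

/-- `perp` as a linear map. -/
def perpL : (Fin 2 → ℝ) →ₗ[ℝ] (Fin 2 → ℝ) where
  toFun := perp
  map_add' u v := by
    funext i; fin_cases i <;> (simp [perp]; try ring)
  map_smul' c v := by
    funext i; fin_cases i <;> (simp [perp]; try ring)

lemma jac_perp_comp (f : (Fin 2 → ℝ) → (Fin 2 → ℝ)) (x : Fin 2 → ℝ)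
    (hd : DifferentiableAt ℝ f x) (i j : Fin 2) :
    jac (fun y => perp (f y)) x i j = perp (fun k => jac f x k j) i := by
  have h : HasFDerivAt (fun y => perp (f y))
      ((LinearMap.toContinuousLinearMap perpL).comp (fderiv ℝ f x)) x :=
    ((LinearMap.toContinuousLinearMap perpL).hasFDerivAt).comp x hd.hasFDerivAt
  have heq : fderiv ℝ (fun y => perp (f y)) x
      = (LinearMap.toContinuousLinearMap perpL).comp (fderiv ℝ f x) := h.fderiv
  simp only [jac, Matrix.of_apply, heq, ContinuousLinearMap.coe_comp', Function.comp_apply,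
    LinearMap.coe_toContinuousLinearMap']
  rfl

/-- A vector orthogonal to a nonzero `v` is a scalar multiple of `perp v`. -/
lemma parallel_of_orth (z v : Fin 2 → ℝ) (hv : v ≠ 0)
    (h : z 0 * v 0 + z 1 * v 1 = 0) : ∃ k : ℝ, z = k • perp v := by
  have hvv : v 0 ^ 2 + v 1 ^ 2 ≠ 0 := by
    intro hs
    apply hv
    have h0 : v 0 = 0 := by nlinarith [sq_nonneg (v 0), sq_nonneg (v 1)]
    have h1 : v 1 = 0 := by nlinarith [sq_nonneg (v 0), sq_nonneg (v 1)]
    funext i; fin_cases i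
    · exact h0
    · exact h1
  set K : ℝ := (z 0 * v 1 - z 1 * v 0) / (v 0 ^ 2 + v 1 ^ 2) with hK
  have e0 : z 0 = K * perp v 0 := by
    rw [perp_apply_zero, hK]
    field_simp
    linear_combination v 0 * h
  have e1 : z 1 = K * perp v 1 := by
    rw [perp_apply_one, hK]
    field_simp
    linear_combination v 1 * h
  refine ⟨K, ?_⟩
  funext i; fin_cases i
  · exact e0
  · exact e1

theorem orthogonality_iff_lie_bracket_parallel
    (f : (Fin 2 → ℝ) → (Fin 2 → ℝ))
    (hf : ContDiff ℝ 2 f)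
    (x : Fin 2 → ℝ) (hfx : f x ≠ 0) :
    f x ⬝ᵥ ((jac f x + (jac f x)ᵀ).mulVec (perp (f x))) = 0 ↔
    ∃ c : ℝ, lieBr f (fun y => perp (f y)) x = c • perp (f x) := by
  have hd : DifferentiableAt ℝ f x :=
    (hf.differentiable (by norm_num)).differentiableAt
  set v0 : ℝ := f x 0 with hv0
  set v1 : ℝ := f x 1 with hv1
  set a : ℝ := jac f x 0 0 with ha
  set b : ℝ := jac f x 0 1 with hb
  set c : ℝ := jac f x 1 0 with hc
  set d : ℝ := jac f x 1 1 with hd'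
  have hB0 : ∀ j, jac (fun y => perp (f y)) x 0 j = jac f x 1 j := fun j => by
    rw [jac_perp_comp f x hd]; rfl
  have hB1 : ∀ j, jac (fun y => perp (f y)) x 1 j = -(jac f x 0 j) := fun j => by
    rw [jac_perp_comp f x hd]; rfl
  have hz0 : lieBr f (fun y => perp (f y)) x 0 = c * v0 + d * v1 - (a * v1 - b * v0) := by
    simp only [lieBr, Pi.sub_apply, Matrix.mulVec, dotProduct, Fin.sum_univ_two,
      hB0, hB1, perp_apply_zero, perp_apply_one]
    ring
  have hz1 : lieBr f (fun y => perp (f y)) x 1 = -(a * v0) - b * v1 - (c * v1 - d * v0) := by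
    simp only [lieBr, Pi.sub_apply, Matrix.mulVec, dotProduct, Fin.sum_univ_two,
      hB0, hB1, perp_apply_zero, perp_apply_one]
    ring
  have hL : f x ⬝ᵥ ((jac f x + (jac f x)ᵀ).mulVec (perp (f x)))
      = 2 * v0 * v1 * (a - d) + (b + c) * (v1 ^ 2 - v0 ^ 2) := by
    simp only [Matrix.mulVec, dotProduct, Fin.sum_univ_two, Matrix.add_apply,
      Matrix.transpose_apply, perp_apply_zero, perp_apply_one]
    ring
  rw [hL]
  constructor
  · intro h
    apply parallel_of_orth _ _ hfx
    rw [hz0, hz1]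
    linear_combination -h
  · rintro ⟨k, hk⟩
    have h0 := congrFun hk 0
    have h1 := congrFun hk 1
    rw [hz0, Pi.smul_apply, perp_apply_zero, smul_eq_mul] at h0
    rw [hz1, Pi.smul_apply, perp_apply_one, smul_eq_mul] at h1
    linear_combination (-v0) * h0 + (-v1) * h1
end
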